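/- Let a, b > 0, set x* = a/b, and let x : ℝ → ℝ be differentiable with x'(t) = a·x(t) − b·x(t)² and x(t) > 0 for all t ≥ 0. Then the function t ↦ v(x(t)), where v(x) = x/x* − ln(x/x*) − 1, is differentiable on [0, ∞) with derivative d/dt v(x(t)) = −(b/x*)·(x(t) − x*)² ≤ 0; in particular t ↦ v(x(t)) is monotonically nonincreasing on [0, ∞). -/

import Mathlib

/-- Along a positive solution of the logistic equation `ẋ = a·x − b·x²`,
the Volterra function `v(x) = x/x* − ln(x/x*) − 1` (with `x* = a/b`) has
derivative `d/dt v(x(t)) = −(b/x*)·(x(t) − x*)² ≤ 0` for all `t ≥ 0`; in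
particular `t ↦ v(x(t))` is monotonically nonincreasing on `[0, ∞)`. -/
theorem stmt_15 (a b : ℝ) (ha : 0 < a) (hb : 0 < b) (xs : ℝ) (hxs : xs = a / b)
    (v : ℝ → ℝ) (hv : ∀ y : ℝ, v y = y / xs - Real.log (y / xs) - 1)
    (x : ℝ → ℝ)
    (hx : ∀ t : ℝ, 0 ≤ t → HasDerivAt x (a * x t - b * (x t) ^ 2) t)
    (hpos : ∀ t : ℝ, 0 ≤ t → 0 < x t) :
    (∀ t : ℝ, 0 ≤ t →
      HasDerivAt (fun s => v (x s)) (-(b / xs) * (x t - xs) ^ 2) t ∧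
      -(b / xs) * (x t - xs) ^ 2 ≤ 0) ∧
    AntitoneOn (fun t => v (x t)) (Set.Ici (0 : ℝ)) := by
  have hxs0 : 0 < xs := by rw [hxs]; positivity
  have key : ∀ t : ℝ, 0 ≤ t →
      HasDerivAt (fun s => v (x s)) (-(b / xs) * (x t - xs) ^ 2) t := by
    intro t ht
    have hx0 : x t ≠ 0 := (hpos t ht).ne'
    have h1 := hx t ht
    have h2 : HasDerivAt (fun s => x s / xs) ((a * x t - b * x t ^ 2) / xs) t :=
      h1.div_const xs
    have hne : x t / xs ≠ 0 := div_ne_zero hx0 hxs0.ne'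
    have h3 : HasDerivAt (fun s => Real.log (x s / xs))
        ((a * x t - b * x t ^ 2) / xs / (x t / xs)) t := h2.log hne
    have h4 := (h2.sub h3).sub_const 1
    have heq : (fun s => v (x s)) =
        fun s => x s / xs - Real.log (x s / xs) - 1 := by
      funext s; rw [hv]
    rw [heq]
    refine h4.congr_deriv ?_
    subst hxs
    have hb0 : b ≠ 0 := hb.ne'
    have ha0 : a ≠ 0 := ha.ne'
    field_simp
    ring
  refine ⟨fun t ht => ⟨key t ht, ?_⟩, ?_⟩
  · have : 0 ≤ (b / xs) * (x t - xs) ^ 2 := by positivity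
    linarith
  · apply antitoneOn_of_deriv_nonpos (convex_Ici 0)
    · exact fun t ht => ((key t ht).continuousAt).continuousWithinAt
    · intro t ht
      rw [interior_Ici] at ht
      exact (key t (le_of_lt ht)).differentiableAt.differentiableWithinAt
    · intro t ht
      rw [interior_Ici] at ht
      rw [(key t ht.le).deriv]
      have : 0 ≤ (b / xs) * (x t - xs) ^ 2 := by positivity
      linarith
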